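/- Let Λ = HahnSeries ℝ ℂ be the Novikov field and let f : ℝ →₀ Λ be a nonzero finitely supported function, regarded as the finite formal sum Σ_{r ∈ f.support} f(r)·z^r ∈ Λ[z^ℝ]. Then the set {t ∈ ℝ | Σ_{r ∈ f.support} f(r) · HahnSeries.single (t·r) 1 = 0} is a bounded subset of ℝ: there exists B ∈ ℝ such that every t in this set satisfies |t| ≤ B. -/

import Mathlib

/-- The Novikov field `Λ = ℂ((T^ℝ))`, realized as Hahn series. -/
local notation "Λ" => HahnSeries ℝ ℂ

/-- **Boundedness of zeros of the specialization of a finite Novikov sum.**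
If `f : ℝ →₀ Λ` is a nonzero finite formal sum `Σ_r f(r)·z^r ∈ Λ[z^ℝ]`, then the set of
`t ∈ ℝ` at which the specialization `f(T^t) = Σ_r f(r)·T^{t·r}` vanishes is bounded:
there exists `B` with `|t| ≤ B` for all such `t`. -/
theorem bounded_zeros_of_specialization (f : ℝ →₀ Λ) (hf : f ≠ 0) :
    ∃ B : ℝ, ∀ t ∈ {t : ℝ | ∑ r ∈ f.support, f r * HahnSeries.single (t * r) (1 : ℂ) = 0},
      |t| ≤ B := by
  classical
  set T : Finset ℝ := (f.support ×ˢ f.support).image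
    (fun p => ((f p.2).order - (f p.1).order) / (p.1 - p.2)) with hT
  refine ⟨∑ x ∈ T, |x|, ?_⟩
  intro t ht
  simp only [Set.mem_setOf_eq] at ht
  have htT : t ∈ T := by
    by_contra htn
    have hne : f.support.Nonempty := Finsupp.support_nonempty_iff.mpr hf
    set o : ℝ → ℝ := fun r => (f r).order + t * r with ho
    have hinj : ∀ r ∈ f.support, ∀ s ∈ f.support, o r = o s → r = s := by
      intro r hr s hs h
      by_contra hrs
      apply htn
      refine Finset.mem_image.mpr ⟨(r, s), Finset.mem_product.mpr ⟨hr, hs⟩, ?_⟩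
      have hrs' : r - s ≠ 0 := sub_ne_zero.mpr hrs
      field_simp
      simp only [ho] at h
      ring_nf
      ring_nf at h
      linarith
    obtain ⟨r0, hr0, hmin⟩ := f.support.exists_min_image o hne
    have hterm : ∀ r ∈ f.support,
        (f r * HahnSeries.single (t * r) (1 : ℂ)).order = o r := by
      intro r hr
      rw [HahnSeries.order_mul (Finsupp.mem_support_iff.mp hr)
        (HahnSeries.single_ne_zero one_ne_zero), HahnSeries.order_single one_ne_zero]
    have hc := congrArg (fun x : Λ => x.coeff (o r0)) ht
    simp only [HahnSeries.coeff_zero] at hc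
    rw [show (∑ r ∈ f.support, f r * HahnSeries.single (t * r) (1 : ℂ)).coeff (o r0)
        = ∑ r ∈ f.support, (f r * HahnSeries.single (t * r) (1 : ℂ)).coeff (o r0) from
        map_sum (HahnSeries.coeff.addMonoidHom (o r0)) _ _] at hc
    rw [Finset.sum_eq_single r0] at hc
    · have hne0 : f r0 * HahnSeries.single (t * r0) (1 : ℂ) ≠ 0 :=
        mul_ne_zero (Finsupp.mem_support_iff.mp hr0) (HahnSeries.single_ne_zero one_ne_zero)
      have := mt HahnSeries.coeff_order_eq_zero.mp hne0
      rw [hterm r0 hr0] at this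
      exact this hc
    · intro r hr hrr0
      apply HahnSeries.coeff_eq_zero_of_lt_order
      rw [hterm r hr]
      exact lt_of_le_of_ne (hmin r hr) fun h => hrr0 (hinj r hr r0 hr0 h.symm)
    · intro h; exact absurd hr0 h
  calc |t| = ∑ x ∈ ({t} : Finset ℝ), |x| := by simp
    _ ≤ ∑ x ∈ T, |x| := Finset.sum_le_sum_of_subset_of_nonneg
        (Finset.singleton_subset_iff.mpr htT) (fun x _ _ => abs_nonneg x)
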